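/- If X satisfies the recursive max-linear structural equations X = C ⊙ X ∨ Z for a coefficient matrix C supported on a DAG and a vector Z with positive entries, then X = C* ⊙ Z, where C* is the Kleene star of C. Conversely, X = C* ⊙ Z satisfies X = C ⊙ X ∨ Z. -/

import Mathlib

open Finset

noncomputable def tropMul {n : ℕ} (A B : Matrix (Fin n) (Fin n) NNReal) :
    Matrix (Fin n) (Fin n) NNReal :=
  fun i j => univ.sup fun l => A i l * B l j

noncomputable def tropPow {n : ℕ} (A : Matrix (Fin n) (Fin n) NNReal) :
    ℕ → Matrix (Fin n) (Fin n) NNReal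
  | 0 => fun i j => if i = j then 1 else 0
  | k + 1 => tropMul A (tropPow A k)

noncomputable def kleene {n : ℕ} (A : Matrix (Fin n) (Fin n) NNReal) :
    Matrix (Fin n) (Fin n) NNReal :=
  fun i j => (Finset.range n).sup fun k => tropPow A k i j

/-- Tropical matrix-vector product. -/
noncomputable def tropMulVec {n : ℕ} (A : Matrix (Fin n) (Fin n) NNReal)
    (x : Fin n → NNReal) : Fin n → NNReal :=
  fun i => univ.sup fun j => A i j * x j

section Aux

lemma nn_sup_mul {ι : Type*} (s : Finset ι) (f : ι → NNReal) (a : NNReal) :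
    s.sup f * a = s.sup fun i => f i * a := by
  refine Finset.comp_sup_eq_sup_comp (· * a) (fun x y => ?_) (by simp)
  rcases le_total x y with h | h <;>
    simp [max_eq_right h, max_eq_left h,
      max_eq_right (mul_le_mul_left h a), max_eq_left (mul_le_mul_left h a)]

lemma nn_mul_sup {ι : Type*} (s : Finset ι) (f : ι → NNReal) (a : NNReal) :
    a * s.sup f = s.sup fun i => a * f i := by
  rw [mul_comm, nn_sup_mul]; simp [mul_comm]

lemma nn_mul_max (a x y : NNReal) : a * max x y = max (a * x) (a * y) := by
  rcases le_total x y with h | h <;>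
    simp [max_eq_right h, max_eq_left h,
      max_eq_right (mul_le_mul_right h a), max_eq_left (mul_le_mul_right h a)]

lemma nn_sup_max {ι : Type*} (s : Finset ι) (f g : ι → NNReal) :
    (s.sup fun i => max (f i) (g i)) = max (s.sup f) (s.sup g) := by
  apply le_antisymm
  · exact Finset.sup_le fun i hi =>
      max_le_max (Finset.le_sup hi) (Finset.le_sup hi)
  · exact max_le (Finset.sup_mono_fun fun i _ => le_max_left _ _)
      (Finset.sup_mono_fun fun i _ => le_max_right _ _)

variable {n : ℕ} (C : Matrix (Fin n) (Fin n) NNReal)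

/-- One tropMulVec application distributes over pointwise max. -/
lemma tropMulVec_max (x z : Fin n → NNReal) :
    tropMulVec C (fun j => max (x j) (z j)) =
      fun i => max (tropMulVec C x i) (tropMulVec C z i) := by
  funext i
  simp only [tropMulVec]
  rw [← nn_sup_max]
  exact Finset.sup_congr rfl fun j _ => nn_mul_max _ _ _

/-- tropMulVec distributes over finite sups of vectors. -/
lemma tropMulVec_finsup {ι : Type*} (s : Finset ι) (v : ι → Fin n → NNReal) (i : Fin n) :
    tropMulVec C (fun j => s.sup fun k => v k j) i = s.sup fun k => tropMulVec C (v k) i := by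
  simp only [tropMulVec]
  rw [Finset.sup_comm]
  exact Finset.sup_congr rfl fun j _ => nn_mul_sup _ _ _

lemma tropMulVec_pow (z : Fin n → NNReal) :
    ∀ k, tropMulVec (tropPow C k) z = (tropMulVec C)^[k] z := by
  intro k
  induction k generalizing z with
  | zero =>
    funext i
    simp only [tropMulVec, tropPow, Function.iterate_zero, id]
    apply le_antisymm
    · refine Finset.sup_le fun j _ => ?_
      by_cases h : i = j <;> simp [h]
    · have := Finset.le_sup (f := fun j => (if i = j then (1:NNReal) else 0) * z j)
        (Finset.mem_univ i)
      simpa using this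
  | succ k ih =>
    funext i
    have assoc : tropMulVec (tropPow C (k+1)) z i
        = tropMulVec C (tropMulVec (tropPow C k) z) i := by
      simp only [tropMulVec, tropPow, tropMul]
      rw [Finset.sup_congr rfl fun j (_ : j ∈ univ) =>
        nn_sup_mul univ (fun l => C i l * tropPow C k l j) (z j), Finset.sup_comm]
      refine Finset.sup_congr rfl fun l _ => ?_
      rw [nn_mul_sup]
      refine Finset.sup_congr rfl fun j _ => ?_
      ring
    rw [assoc, ih, Function.iterate_succ_apply']

/-- kleene star applied to a vector equals the sup of the iterates. -/
lemma kleene_eq_sup (z : Fin n → NNReal) (i : Fin n) :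
    tropMulVec (kleene C) z i = (range n).sup fun k => (tropMulVec C)^[k] z i := by
  simp only [tropMulVec, kleene]
  rw [Finset.sup_congr rfl fun j (_ : j ∈ univ) =>
    nn_sup_mul (range n) (fun k => tropPow C k i j) (z j), Finset.sup_comm]
  refine Finset.sup_congr rfl fun k _ => ?_
  rw [← tropMulVec_pow]
  rfl

end Aux

section Nilpotent

variable {n : ℕ} (C : Matrix (Fin n) (Fin n) NNReal) (E : Fin n → Fin n → Prop)

lemma tropPow_path (hsupp : ∀ i j, C i j ≠ 0 → E j i) :
    ∀ k i j, tropPow C k i j ≠ 0 →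
      ∃ f : ℕ → Fin n, f 0 = j ∧ f k = i ∧ ∀ t < k, E (f t) (f (t+1)) := by
  intro k
  induction k with
  | zero =>
    intro i j h
    by_cases hij : i = j
    · exact ⟨fun _ => j, rfl, by simp [hij], by omega⟩
    · simp [tropPow, hij] at h
  | succ k ih =>
    intro i j h
    simp only [tropPow, tropMul] at h
    obtain ⟨l, hl⟩ : ∃ l, C i l * tropPow C k l j ≠ 0 := by
      by_contra hc
      push_neg at hc
      exact h (le_antisymm (Finset.sup_le fun l _ => (hc l).le) (zero_le))
    have hC : C i l ≠ 0 := fun h0 => hl (by simp [h0])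
    have hP : tropPow C k l j ≠ 0 := fun h0 => hl (by simp [h0])
    obtain ⟨f, hf0, hfk, hfe⟩ := ih l j hP
    refine ⟨fun t => if t ≤ k then f t else i, by simp [hf0], by simp, ?_⟩
    intro t ht
    rcases Nat.lt_or_ge t k with h1 | h1
    · simpa [Nat.le_of_lt h1, Nat.succ_le_of_lt h1] using hfe t h1
    · have ht' : t = k := by omega
      subst ht'
      simpa [hfk] using hsupp i l hC

lemma chain_trans (f : ℕ → Fin n) (N : ℕ) (hf : ∀ t < N, E (f t) (f (t+1))) :
    ∀ a d, a + d + 1 ≤ N → Relation.TransGen E (f a) (f (a + d + 1)) := by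
  intro a d
  induction d with
  | zero => exact fun h => Relation.TransGen.single (hf a (by omega))
  | succ d ih =>
    intro h
    have e : a + (d + 1) + 1 = (a + d + 1) + 1 := by omega
    rw [e]
    exact (ih (by omega)).tail (hf (a + d + 1) (by omega))

lemma tropPow_n_zero (hacyc : ∀ i, ¬ Relation.TransGen E i i)
    (hsupp : ∀ i j, C i j ≠ 0 → E j i) (i j : Fin n) : tropPow C n i j = 0 := by
  by_contra h
  obtain ⟨f, hf0, hfn, hfe⟩ := tropPow_path C E hsupp n i j h
  have key : ∀ a b : ℕ, a < b → b ≤ n → f a = f b → False := by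
    intro a b hab hbn heq
    have h1 : a + (b - a - 1) + 1 = b := by omega
    have h2 := chain_trans E f n hfe a (b - a - 1) (by omega)
    rw [h1] at h2
    exact hacyc _ (heq ▸ h2)
  obtain ⟨a, b, hab, heq⟩ := Fintype.exists_ne_map_eq_of_card_lt
    (fun t : Fin (n+1) => f t) (by simp)
  rcases hab.lt_or_gt with h' | h'
  · exact key a b h' (Nat.lt_succ_iff.mp b.isLt) heq
  · exact key b a h' (Nat.lt_succ_iff.mp a.isLt) heq.symm

end Nilpotent

lemma iter_max {n : ℕ} (C : Matrix (Fin n) (Fin n) NNReal) :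
    ∀ m (x z : Fin n → NNReal),
      (tropMulVec C)^[m] (fun j => max (x j) (z j)) =
        fun i => max (((tropMulVec C)^[m] x) i) (((tropMulVec C)^[m] z) i) := by
  intro m
  induction m with
  | zero => intro x z; simp
  | succ m ih =>
    intro x z
    rw [Function.iterate_succ_apply, tropMulVec_max, ih]
    funext i
    rw [← Function.iterate_succ_apply, ← Function.iterate_succ_apply]

/-- For `C` supported on a DAG and `Z` positive, `X` satisfies the
recursive max-linear structural equations `X = C ⊙ X ∨ Z` if and only if `X = C* ⊙ Z`. -/
theorem maxLinear_solution {n : ℕ} (E : Fin n → Fin n → Prop)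
    (hacyc : ∀ i, ¬ Relation.TransGen E i i)
    (C : Matrix (Fin n) (Fin n) NNReal)
    (hsupp : ∀ i j, C i j ≠ 0 → E j i)
    (X Z : Fin n → NNReal) (hZ : ∀ i, 0 < Z i) :
    (∀ i, X i = max (tropMulVec C X i) (Z i)) ↔ X = tropMulVec (kleene C) Z := by
  constructor
  · intro hX
    funext i
    have hX' : X = fun j => max (tropMulVec C X j) (Z j) := funext hX
    have unroll : ∀ m, X i = max (((tropMulVec C)^[m] X) i)
        ((range m).sup fun k => ((tropMulVec C)^[k] Z) i) := by
      intro m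
      induction m with
      | zero => simp
      | succ m ih =>
        have h1 : (tropMulVec C)^[m] X
            = fun i => max (((tropMulVec C)^[m+1] X) i) (((tropMulVec C)^[m] Z) i) := by
          conv_lhs => rw [hX']
          rw [iter_max]
          funext i
          rw [← Function.iterate_succ_apply]
        rw [ih, congrFun h1 i, Finset.range_add_one, Finset.sup_insert]
        rw [max_assoc, max_comm (((tropMulVec C)^[m] Z) i), ← max_assoc]
    have hzero : ((tropMulVec C)^[n] X) i = 0 := by
      rw [← tropMulVec_pow]
      refine le_antisymm (Finset.sup_le fun j _ => ?_) (zero_le)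
      rw [tropPow_n_zero C E hacyc hsupp i j]
      simp
    rw [unroll n, hzero, kleene_eq_sup]
    simp
  · intro hXZ i
    rw [hXZ]
    have hK : tropMulVec (kleene C) Z = fun j => (range n).sup fun k => ((tropMulVec C)^[k] Z) j :=
      funext (kleene_eq_sup C Z)
    rw [hK, tropMulVec_finsup]
    have h2 : ((range n).sup fun k => tropMulVec C ((tropMulVec C)^[k] Z) i)
        = (range n).sup fun k => ((tropMulVec C)^[k+1] Z) i :=
      Finset.sup_congr rfl fun k _ => by rw [Function.iterate_succ_apply']
    rw [h2]
    have hzero : ((tropMulVec C)^[n] Z) i = 0 := by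
      rw [← tropMulVec_pow]
      refine le_antisymm (Finset.sup_le fun j _ => ?_) (zero_le)
      rw [tropPow_n_zero C E hacyc hsupp i j]
      simp
    have hn : 0 < n := i.pos
    apply le_antisymm
    · refine Finset.sup_le fun k hk => ?_
      rcases Nat.eq_zero_or_pos k with rfl | hkpos
      · simpa using le_max_right _ (Z i)
      · obtain ⟨k', rfl⟩ := Nat.exists_eq_succ_of_ne_zero hkpos.ne'
        have hkn : k' + 1 < n := Finset.mem_range.mp hk
        exact le_max_of_le_left (Finset.le_sup (f := fun k => ((tropMulVec C)^[k+1] Z) i)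
          (b := k') (Finset.mem_range.mpr (by omega)))
    · refine max_le (Finset.sup_le fun k hk => ?_) ?_
      · have hk' := Finset.mem_range.mp hk
        rcases Nat.lt_or_ge (k+1) n with h1 | h1
        · exact Finset.le_sup (f := fun k => ((tropMulVec C)^[k] Z) i)
            (Finset.mem_range.mpr h1)
        · have : k + 1 = n := by omega
          rw [this, hzero]
          exact zero_le
      · have : ((tropMulVec C)^[0] Z) i = Z i := by simp
        rw [← this]
        exact Finset.le_sup (f := fun k => ((tropMulVec C)^[k] Z) i)
          (Finset.mem_range.mpr hn)
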